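/- Let A be a field of characteristic zero, B a finite-dimensional commutative A-algebra, and L a field extension of A. Let R be an integral domain which is an A-algebra, F its field of fractions, and e : R → L ⊗[A] B an A-algebra homomorphism such that for every maximal ideal m of B, the composite of e with the natural map L ⊗[A] B → L ⊗[A] (B/m) is injective and sends every nonzero element of R to an element that is not a zero divisor in L ⊗[A] (B/m). Then there is a unique A-algebra homomorphism ẽ : F → L ⊗[A] B such that ẽ composed with the canonical map R → F equals e. -/

import Mathlib

/-- Let `A` be a field of characteristic zero, `B` a finite-dimensional
commutative `A`-algebra, and `L` a field extension of `A`.  Let `R` be an integral domain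
which is an `A`-algebra, `F` its field of fractions, and `e : R → L ⊗[A] B` an `A`-algebra
homomorphism such that for every maximal ideal `m` of `B` the composite of `e` with
`L ⊗[A] B → L ⊗[A] (B/m)` is injective and sends every nonzero element of `R` to a
non-zero-divisor of `L ⊗[A] (B/m)`.  Then there is a unique `A`-algebra homomorphism
`ẽ : F → L ⊗[A] B` with `ẽ ∘ (R → F) = e`. -/
theorem exists_unique_extension_to_fractionField_general
    {A B L R F : Type*} [Field A] [CharZero A] [CommRing B] [Algebra A B]
    [FiniteDimensional A B] [Field L] [Algebra A L]
    [CommRing R] [IsDomain R] [Algebra A R]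
    [Field F] [Algebra R F] [IsFractionRing R F] [Algebra A F] [IsScalarTower A R F]
    (e : R →ₐ[A] TensorProduct A L B)
    (h : ∀ m : Ideal B, m.IsMaximal →
      Function.Injective
        ((Algebra.TensorProduct.map (AlgHom.id A L) (Ideal.Quotient.mkₐ A m)).comp e) ∧
      ∀ r : R, r ≠ 0 →
        Algebra.TensorProduct.map (AlgHom.id A L) (Ideal.Quotient.mkₐ A m) (e r) ∈
          nonZeroDivisors (TensorProduct A L (B ⧸ m))) :
    ∃! etilde : F →ₐ[A] TensorProduct A L B,
      etilde.comp (IsScalarTower.toAlgHom A R F) = e := by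
  -- B is an Artinian ring
  have hart : IsArtinianRing B := isArtinian_of_tower A inferInstance
  -- Key: e sends nonzero elements to units
  have key : ∀ r : R, r ≠ 0 → IsUnit (e r) := by
    intro r hr
    by_contra hnu
    obtain ⟨M, hM, hmem⟩ := exists_max_ideal_of_mem_nonunits hnu
    set m : Ideal B :=
      M.comap (Algebra.TensorProduct.includeRight : B →ₐ[A] TensorProduct A L B).toRingHom
      with hm_def
    haveI : M.IsPrime := hM.isPrime
    haveI hmp : m.IsPrime := Ideal.comap_isPrime _ M
    haveI hmm : m.IsMaximal := IsArtinianRing.isMaximal_of_isPrime m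
    set π := Algebra.TensorProduct.map (AlgHom.id A L) (Ideal.Quotient.mkₐ A m)
    -- π (e r) is a nonzerodivisor, hence a unit in the finite-dimensional L-algebra
    have hnzd := (h m hmm).2 r hr
    have hu : IsUnit (π (e r)) := by
      set T := TensorProduct A L (B ⧸ m)
      have hinj : Function.Injective (LinearMap.mulLeft L (π (e r))) := by
        intro x y hxy
        simp only [LinearMap.mulLeft_apply] at hxy
        have hz : (x - y) * π (e r) = 0 := by
          rw [sub_mul, mul_comm x, mul_comm y, hxy, sub_self]
        have := hnzd.2 _ hz
        exact sub_eq_zero.mp this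
      have hsurj : Function.Surjective (LinearMap.mulLeft L (π (e r))) :=
        LinearMap.surjective_of_injective hinj
      obtain ⟨y, hy⟩ := hsurj 1
      exact IsUnit.of_mul_eq_one y hy
    -- kernel of π is contained in M
    have hker : RingHom.ker (π : TensorProduct A L B →+* TensorProduct A L (B ⧸ m)) ≤ M := by
      have hk := Algebra.TensorProduct.lTensor_ker (R := A) (A := L)
          (Ideal.Quotient.mkₐ A m) (Ideal.Quotient.mkₐ_surjective A m)
      have hkq : RingHom.ker (Ideal.Quotient.mkₐ A m) = m := by
        ext x; simp [RingHom.mem_ker, Ideal.Quotient.eq_zero_iff_mem]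
      rw [show (π : TensorProduct A L B →+* TensorProduct A L (B ⧸ m)) =
        ((Algebra.TensorProduct.map (AlgHom.id A L) (Ideal.Quotient.mkₐ A m) :
          TensorProduct A L B →ₐ[A] TensorProduct A L (B ⧸ m)) :
          TensorProduct A L B →+* TensorProduct A L (B ⧸ m)) from rfl]
      calc RingHom.ker (Algebra.TensorProduct.map (AlgHom.id A L) (Ideal.Quotient.mkₐ A m)) =
          Ideal.map Algebra.TensorProduct.includeRight
            (RingHom.ker (Ideal.Quotient.mkₐ A m)) := hk
        _ ≤ M := by
          rw [hkq, Ideal.map_le_iff_le_comap]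
          exact le_refl _
    -- derive a contradiction
    have hπsurj : Function.Surjective π := by
      intro z
      induction z using TensorProduct.induction_on with
      | zero => exact ⟨0, map_zero _⟩
      | tmul l b =>
        obtain ⟨b', rfl⟩ := Ideal.Quotient.mkₐ_surjective A m b
        exact ⟨l ⊗ₜ b', by simp [π, Algebra.TensorProduct.map_tmul]⟩
      | add x y hx hy =>
        obtain ⟨x', rfl⟩ := hx
        obtain ⟨y', rfl⟩ := hy
        exact ⟨x' + y', map_add _ _ _⟩
    have hmap : π (e r) ∈ M.map (π : TensorProduct A L B →+* TensorProduct A L (B ⧸ m)) :=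
      Ideal.mem_map_of_mem _ hmem
    have htop : M.map (π : TensorProduct A L B →+* TensorProduct A L (B ⧸ m)) = ⊤ :=
      Ideal.eq_top_of_isUnit_mem _ hmap hu
    have hcm := Ideal.comap_map_of_surjective
      (π : TensorProduct A L B →+* TensorProduct A L (B ⧸ m)) hπsurj M
    rw [htop, Ideal.comap_top, ← RingHom.ker_eq_comap_bot] at hcm
    have hMtop : M = ⊤ := by
      rw [← sup_eq_left.mpr hker, ← hcm]
    exact hM.ne_top hMtop
  -- units hypothesis for localization lift
  have hf : ∀ y : nonZeroDivisors R, IsUnit (e y) := fun y =>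
    key y (nonZeroDivisors.ne_zero y.2)
  refine ⟨IsLocalization.liftAlgHom (M := nonZeroDivisors R) (S := F) hf, ?_, ?_⟩
  · ext r
    simp [IsLocalization.liftAlgHom_apply, IsScalarTower.toAlgHom_apply,
      IsLocalization.lift_eq]
  · intro g hg
    apply AlgHom.coe_ringHom_injective
    apply IsLocalization.ringHom_ext (nonZeroDivisors R)
    ext r
    have h1 : g (algebraMap R F r) = e r := by
      have := AlgHom.congr_fun hg r
      simpa using this
    simp only [RingHom.coe_comp, Function.comp_apply]
    rw [show ((g : F →+* TensorProduct A L B) (algebraMap R F r)) = g (algebraMap R F r) from rfl,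
      h1]
    simp [IsLocalization.liftAlgHom_apply, IsLocalization.lift_eq]
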